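/- Let G be a finite undirected graph with weights wt : V → ℝ and let A be any independent set of G. Orient G so that all nodes of A precede all nodes not in A. Then the opportunity cost algorithm applied to this orientation outputs an independent set A' with wt(A') ≥ wt(A). In particular, for suitable orientation the algorithm outputs a maximum weight independent set. -/

import Mathlib

/-- If `A` is an independent set of an undirected weighted graph `H`, and `G` is the
orientation of `H` along an order in which all nodes of `A` precede all nodes not in
`A` (edges oriented from earlier to later), then the opportunity cost algorithm
outputs an independent set `A' = {u : select u}` with `wt(A') ≥ wt(A)`. -/
theorem stmt_10 {V : Type*} [Fintype V] [DecidableEq V]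
    (H : SimpleGraph V) [DecidableRel H.Adj] (wt : V → ℝ)
    (A : Finset V) (hA : ∀ x ∈ A, ∀ y ∈ A, ¬H.Adj x y)
    (f : V → ℕ) (hfinj : Function.Injective f)
    (hAfirst : ∀ u ∈ A, ∀ v : V, v ∉ A → f u < f v)
    (E : V → V → Prop) [DecidableRel E]
    (hE : ∀ u v : V, E u v ↔ H.Adj u v ∧ f u < f v)
    (val : V → ℝ)
    (hval : ∀ u, val u = wt u - ∑ v ∈ Finset.univ.filter (fun v => E v u), max 0 (val v))
    (select : V → Prop) [DecidablePred select]
    (hsel : ∀ u, select u ↔ (0 ≤ val u ∧ ∀ v, E u v → ¬select v)) :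
    (∀ x ∈ Finset.univ.filter select, ∀ y ∈ Finset.univ.filter select, ¬H.Adj x y) ∧
    ∑ u ∈ A, wt u ≤ ∑ u ∈ Finset.univ.filter select, wt u := by
  classical
  set P : V → ℝ := fun v => max 0 (val v) with hP
  have hPnn : ∀ v, 0 ≤ P v := fun v => le_max_left _ _
  set S := Finset.univ.filter select with hS
  have hSmem : ∀ u, u ∈ S ↔ select u := by
    intro u; simp [hS]
  constructor
  · -- independence of the selected set
    intro x hx y hy hadj
    rw [hSmem] at hx hy
    rcases lt_or_gt_of_ne (hfinj.ne (H.ne_of_adj hadj)) with h | h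
    · exact ((hsel x).mp hx).2 y ((hE x y).mpr ⟨hadj, h⟩) hy
    · exact ((hsel y).mp hy).2 x ((hE y x).mpr ⟨hadj.symm, h⟩) hx
  · -- weight comparison
    -- nodes of A have no predecessors, so val = wt on A
    have hAval : ∀ u ∈ A, val u = wt u := by
      intro u hu
      rw [hval u]
      have hempty : Finset.univ.filter (fun v => E v u) = ∅ := by
        apply Finset.filter_eq_empty_iff.mpr
        intro v _ hEv
        obtain ⟨hadj, hlt⟩ := (hE v u).mp hEv
        by_cases hv : v ∈ A
        · exact hA v hv u hu hadj
        · exact absurd hlt (not_lt.mpr (le_of_lt (hAfirst u hu v hv)))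
      rw [hempty]; simp
    have h1 : ∑ u ∈ A, wt u ≤ ∑ u, P u := by
      calc ∑ u ∈ A, wt u ≤ ∑ u ∈ A, P u :=
            Finset.sum_le_sum (fun u hu => by
              rw [← hAval u hu]; exact le_max_right _ _)
        _ ≤ ∑ u, P u :=
            Finset.sum_le_sum_of_subset_of_nonneg (Finset.subset_univ _)
              (fun v _ _ => hPnn v)
    have h2 : ∑ u, P u ≤ ∑ u ∈ S, wt u := by
      have hsplit : ∑ u ∈ S, P u + ∑ u ∈ Finset.univ.filter (fun u => ¬ select u), P u
          = ∑ u, P u := Finset.sum_filter_add_sum_filter_not _ _ _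
      -- on S, P = val
      have hSP : ∑ u ∈ S, P u = ∑ u ∈ S, val u := by
        apply Finset.sum_congr rfl
        intro u hu
        rw [hSmem] at hu
        exact max_eq_right ((hsel u).mp hu).1
      -- RHS rewrite
      have hRHS : ∑ u ∈ S, wt u
          = ∑ u ∈ S, val u + ∑ u ∈ S, ∑ v ∈ Finset.univ.filter (fun v => E v u), P v := by
        rw [← Finset.sum_add_distrib]
        apply Finset.sum_congr rfl
        intro u _
        rw [hval u]; ring
      -- bound sum over unselected vertices
      set D := Finset.univ.filter (fun u => ¬ select u) with hD
      set D₀ := Finset.univ.filter (fun u => ¬ select u ∧ 0 ≤ val u) with hD₀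
      have hDD₀ : ∑ u ∈ D, P u = ∑ u ∈ D₀, P u := by
        symm
        apply Finset.sum_subset
        · intro x hx
          simp only [hD₀, Finset.mem_filter] at hx
          simp [hD, hx.2.1]
        · intro x hx hx'
          simp only [hD, Finset.mem_filter] at hx
          simp only [hD₀, Finset.mem_filter, Finset.mem_univ, true_and] at hx'
          have : val x < 0 := by
            by_contra h
            exact hx' ⟨hx.2, le_of_not_gt h⟩
          simp [hP, max_eq_left (le_of_lt this)]
      -- choice of selected successor
      have hex : ∀ w ∈ D₀, ∃ u, E w u ∧ select u := by
        intro w hw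
        simp only [hD₀, Finset.mem_filter, Finset.mem_univ, true_and] at hw
        by_contra hcon
        push_neg at hcon
        exact hw.1 ((hsel w).mpr ⟨hw.2, fun v hv hs => hcon v hv hs⟩)
      set g : V → V := fun w => if h : ∃ u, E w u ∧ select u then h.choose else w with hg
      have hgS : ∀ w ∈ D₀, g w ∈ S ∧ E w (g w) := by
        intro w hw
        have h := hex w hw
        simp only [hg, dif_pos h]
        exact ⟨(hSmem _).mpr h.choose_spec.2, h.choose_spec.1⟩
      have hfiber : ∑ u ∈ S, ∑ w ∈ D₀.filter (fun w => g w = u), P w = ∑ w ∈ D₀, P w :=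
        Finset.sum_fiberwise_of_maps_to (fun w hw => (hgS w hw).1) _
      have hDbound : ∑ u ∈ D₀, P u
          ≤ ∑ u ∈ S, ∑ v ∈ Finset.univ.filter (fun v => E v u), P v := by
        rw [← hfiber]
        apply Finset.sum_le_sum
        intro u _
        apply Finset.sum_le_sum_of_subset_of_nonneg
        · intro w hw
          simp only [Finset.mem_filter] at hw ⊢
          refine ⟨Finset.mem_univ _, ?_⟩
          rw [← hw.2]
          exact (hgS w hw.1).2
        · intro v _ _
          exact hPnn v
      calc ∑ u, P u = ∑ u ∈ S, P u + ∑ u ∈ D, P u := hsplit.symm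
        _ = ∑ u ∈ S, val u + ∑ u ∈ D₀, P u := by rw [hSP, hDD₀]
        _ ≤ ∑ u ∈ S, val u + ∑ u ∈ S, ∑ v ∈ Finset.univ.filter (fun v => E v u), P v :=
            add_le_add_right hDbound _
        _ = ∑ u ∈ S, wt u := hRHS.symm
    exact h1.trans h2
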